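/- The Lobachevsky function has the Fourier series representation Λ(θ) = (1/2) ∑_{m=1}^∞ sin(2mθ)/m² for all real θ. -/

import Mathlib

open Real

noncomputable def Λ (θ : ℝ) : ℝ := -∫ t in (0:ℝ)..θ, Real.log |2 * Real.sin t|

section aux
open MeasureTheory intervalIntegral Set Filter

lemma meas_logsin : Measurable (fun t : ℝ => Real.log |Real.sin t|) :=
  Real.measurable_log.comp (Real.continuous_sin.measurable.abs)

lemma integrable_log_sin_base :
    IntervalIntegrable (fun t : ℝ => Real.log |Real.sin t|) volume 0 (π/2) := by
  set C : ℝ := 2 * (2/π) ^ (-(1:ℝ)/2) with hC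
  have hrpow : IntervalIntegrable (fun t : ℝ => C * t ^ (-(1:ℝ)/2)) volume 0 (π/2) :=
    (intervalIntegral.intervalIntegrable_rpow' (by norm_num)).const_mul C
  refine hrpow.mono_fun (meas_logsin.aestronglyMeasurable) ?_
  refine (ae_restrict_iff' measurableSet_uIoc).mpr (Filter.Eventually.of_forall ?_)
  intro t ht
  rw [Set.uIoc_of_le (by positivity)] at ht
  obtain ⟨ht0, ht1⟩ := ht
  have hsinpos : 0 < Real.sin t := Real.sin_pos_of_pos_of_lt_pi ht0 (by
    have := Real.pi_pos; linarith)
  have hsin1 : Real.sin t ≤ 1 := Real.sin_le_one t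
  have habs : |Real.sin t| = Real.sin t := abs_of_pos hsinpos
  have hlognp : Real.log (Real.sin t) ≤ 0 := Real.log_nonpos hsinpos.le hsin1
  have key : -Real.log (Real.sin t) ≤ 2 * (Real.sin t) ^ (-(1:ℝ)/2) := by
    have h1 : Real.log ((Real.sin t) ^ (-(1:ℝ)/2)) ≤ (Real.sin t) ^ (-(1:ℝ)/2) - 1 :=
      Real.log_le_sub_one_of_pos (Real.rpow_pos_of_pos hsinpos _)
    rw [Real.log_rpow hsinpos] at h1
    nlinarith [Real.rpow_pos_of_pos hsinpos (-(1:ℝ)/2)]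
  have hjordan : 2/π * t ≤ Real.sin t := by
    have := Real.mul_abs_le_abs_sin (x := t) (by rw [abs_of_nonneg ht0.le]; exact ht1)
    rwa [abs_of_nonneg ht0.le, abs_of_pos hsinpos] at this
  have h2 : (Real.sin t) ^ (-(1:ℝ)/2) ≤ (2/π * t) ^ (-(1:ℝ)/2) :=
    Real.rpow_le_rpow_of_nonpos (by positivity) hjordan (by norm_num)
  have h3 : (2/π * t) ^ (-(1:ℝ)/2) = (2/π) ^ (-(1:ℝ)/2) * t ^ (-(1:ℝ)/2) :=
    Real.mul_rpow (by positivity) ht0.le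
  have hbound : ‖Real.log |Real.sin t|‖ ≤ C * t ^ (-(1:ℝ)/2) := by
    rw [habs, Real.norm_eq_abs, abs_of_nonpos hlognp, hC]
    calc -Real.log (Real.sin t) ≤ 2 * (Real.sin t) ^ (-(1:ℝ)/2) := key
    _ ≤ 2 * ((2/π) ^ (-(1:ℝ)/2) * t ^ (-(1:ℝ)/2)) := by rw [← h3]; nlinarith
    _ = 2 * (2/π) ^ (-(1:ℝ)/2) * t ^ (-(1:ℝ)/2) := by ring
  exact hbound.trans (le_abs_self _)

lemma integrable_log_sin_base' :
    IntervalIntegrable (fun t : ℝ => Real.log |Real.sin t|) volume (-(π/2)) (π/2) := by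
  have h2 := (IntervalIntegrable.iff_comp_neg (f := fun t : ℝ => Real.log |Real.sin t|) (a := 0) (b := π/2)).mp integrable_log_sin_base
  rw [neg_zero] at h2
  have h3 : (fun x : ℝ => Real.log |Real.sin (-x)|) = fun x => Real.log |Real.sin x| := by
    funext x; rw [Real.sin_neg, abs_neg]
  rw [h3] at h2
  exact h2.symm.trans integrable_log_sin_base

lemma integrable_log_sin_piece (k : ℤ) :
    IntervalIntegrable (fun t : ℝ => Real.log |Real.sin t|) volume
      ((k:ℝ)*π - π/2) ((k:ℝ)*π + π/2) := by
  have h := integrable_log_sin_base'.comp_add_right (-((k:ℝ)*π))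
  have he : (fun x : ℝ => Real.log |Real.sin (x + -((k:ℝ)*π))|)
      = fun x => Real.log |Real.sin x| := by
    funext x
    have h1 : Real.sin (x + ((-k : ℤ):ℝ)*π) = (-1)^(-k : ℤ) * Real.sin x :=
      Real.sin_add_int_mul_pi x (-k)
    rw [show x + -((k:ℝ)*π) = x + ((-k : ℤ):ℝ)*π by push_cast; ring, h1]
    rcases Int.even_or_odd (-k) with he | ho
    · rw [he.neg_one_zpow, one_mul]
    · rw [ho.neg_one_zpow, neg_one_mul, abs_neg]
  rw [he, show -(π/2) - -((k:ℝ)*π) = (k:ℝ)*π - π/2 by ring,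
    show π/2 - -((k:ℝ)*π) = (k:ℝ)*π + π/2 by ring] at h
  exact h

lemma integrable_log_sin_chain (n : ℕ) :
    IntervalIntegrable (fun t : ℝ => Real.log |Real.sin t|) volume
      (-((n:ℝ)*π) - π/2) ((n:ℝ)*π + π/2) := by
  induction n with
  | zero => simpa using integrable_log_sin_base'
  | succ n ih =>
      have hL := integrable_log_sin_piece (-(n+1) : ℤ)
      have hR := integrable_log_sin_piece ((n+1) : ℤ)
      rw [show ((-(n+1) : ℤ):ℝ)*π - π/2 = -(((n:ℝ)+1)*π) - π/2 by push_cast; ring,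
        show ((-(n+1) : ℤ):ℝ)*π + π/2 = -((n:ℝ)*π) - π/2 by push_cast; ring] at hL
      rw [show (((n+1) : ℤ):ℝ)*π - π/2 = (n:ℝ)*π + π/2 by push_cast; ring,
        show (((n+1) : ℤ):ℝ)*π + π/2 = ((n:ℝ)+1)*π + π/2 by push_cast; ring] at hR
      have h := (hL.trans ih).trans hR
      rw [show (((n+1:ℕ)):ℝ) = (n:ℝ)+1 from by push_cast; ring]
      rw [show -(((n:ℝ)+1) * π) - π/2 = -(((n:ℝ)+1)*π) - π/2 from rfl]
      exact h

lemma integrable_log_sin (a b : ℝ) :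
    IntervalIntegrable (fun t : ℝ => Real.log |Real.sin t|) volume a b := by
  obtain ⟨n, hn⟩ := exists_nat_ge ((max |a| |b|) / π)
  have hπ := Real.pi_pos
  have hbig : max |a| |b| ≤ (n:ℝ)*π := by
    rw [div_le_iff₀ hπ] at hn
    linarith
  refine (integrable_log_sin_chain n).mono_set ?_
  have hn0 : (0:ℝ) ≤ (n:ℝ)*π := by positivity
  have hmem : ∀ x : ℝ, |x| ≤ (n:ℝ)*π → x ∈ Set.uIcc (-((n:ℝ)*π) - π/2) ((n:ℝ)*π + π/2) := by
    intro x hx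
    rw [Set.uIcc_of_le (by linarith), Set.mem_Icc]
    rw [abs_le] at hx
    constructor <;> linarith
  exact Set.uIcc_subset_uIcc (hmem a (le_trans (le_max_left _ _) hbig))
    (hmem b (le_trans (le_max_right _ _) hbig))

lemma hasSum_G (r t : ℝ) (hr0 : 0 ≤ r) (hr1 : r < 1) :
    HasSum (fun m : ℕ+ => r ^ (m:ℕ) * Real.cos (2 * (m:ℝ) * t) / (m:ℝ))
      (-(1/2) * Real.log ((1-r)^2 + 4*r*(Real.sin t)^2)) := by
  set z : ℂ := (r : ℂ) * Complex.exp ((2*t : ℝ) * Complex.I) with hz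
  have hnz : ‖z‖ < 1 := by
    rw [hz, norm_mul, Complex.norm_real, Complex.norm_exp_ofReal_mul_I, Real.norm_eq_abs,
      _root_.abs_of_nonneg hr0]
    simpa using hr1
  have hsum := Complex.hasSum_taylorSeries_neg_log hnz
  have hre := hsum.mapL Complex.reCLM
  have hterm : ∀ n : ℕ, Complex.reCLM (z ^ n / n) = r ^ n * Real.cos (2 * n * t) / n := by
    intro n
    have h1 : z ^ n / n = ((r ^ n / n : ℝ) : ℂ) * Complex.exp (((2 * n * t : ℝ)) * Complex.I) := by
      rw [hz, mul_pow, ← Complex.exp_nat_mul]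
      push_cast
      ring
    rw [Complex.reCLM_apply, h1, Complex.re_ofReal_mul, Complex.exp_ofReal_mul_I_re]
    ring
  rw [funext hterm] at hre
  -- identify the sum
  have hzre : z.re = r * Real.cos (2*t) := by
    rw [hz, Complex.re_ofReal_mul, Complex.exp_ofReal_mul_I_re]
  have hzim : z.im = r * Real.sin (2*t) := by
    rw [hz, Complex.im_ofReal_mul, Complex.exp_ofReal_mul_I_im]
  have hnormSq : Complex.normSq (1 - z) = (1-r)^2 + 4*r*(Real.sin t)^2 := by
    rw [Complex.normSq_apply, Complex.sub_re, Complex.sub_im, Complex.one_re, Complex.one_im,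
      hzre, hzim]
    have hc : Real.cos (2*t) = 1 - 2 * (Real.sin t)^2 := by
      rw [Real.cos_two_mul]
      nlinarith [Real.sin_sq_add_cos_sq t]
    have hs : (Real.sin (2*t))^2 + (Real.cos (2*t))^2 = 1 := by
      nlinarith [Real.sin_sq_add_cos_sq (2*t)]
    nlinarith
  have hval : (-Complex.log (1 - z)).re = -(1/2) * Real.log ((1-r)^2 + 4*r*(Real.sin t)^2) := by
    rw [Complex.neg_re, Complex.log_re, ← hnormSq, Complex.norm_def, Real.log_sqrt
      (Complex.normSq_nonneg _)]
    ring
  rw [show Complex.reCLM (-Complex.log (1-z)) = (-Complex.log (1-z)).re from rfl, hval] at hre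
  have h0 : ∀ x ∉ Set.range (fun m : ℕ+ => (m:ℕ)),
      r ^ x * Real.cos (2 * x * t) / x = 0 := by
    intro x hx
    have hx0 : x = 0 := by
      by_contra h
      exact hx ⟨⟨x, Nat.pos_of_ne_zero h⟩, rfl⟩
    subst hx0
    simp
  exact (Function.Injective.hasSum_iff PNat.coe_injective h0).mpr hre

lemma integral_term (r θ : ℝ) (m : ℕ+) :
    ∫ t in (0:ℝ)..θ, r ^ (m:ℕ) * Real.cos (2 * (m:ℝ) * t) / (m:ℝ)
      = r ^ (m:ℕ) * Real.sin (2 * (m:ℝ) * θ) / (2 * (m:ℝ)^2) := by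
  have hm : (0:ℝ) < (m:ℝ) := by exact_mod_cast m.pos
  have h1 : ∀ t : ℝ, r ^ (m:ℕ) * Real.cos (2 * (m:ℝ) * t) / (m:ℝ)
      = (r ^ (m:ℕ) / (m:ℝ)) * Real.cos (2 * (m:ℝ) * t) := by intro t; ring
  simp_rw [h1]
  rw [intervalIntegral.integral_const_mul]
  have h2 : ∫ t in (0:ℝ)..θ, Real.cos (2 * (m:ℝ) * t)
      = Real.sin (2 * (m:ℝ) * θ) / (2 * (m:ℝ)) := by
    have := intervalIntegral.integral_comp_mul_left (fun x => Real.cos x)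
      (a := (0:ℝ)) (b := θ) (c := 2 * (m:ℝ)) (by positivity)
    rw [this]
    rw [integral_cos]
    rw [mul_zero, Real.sin_zero, sub_zero, smul_eq_mul]
    field_simp
  rw [h2]
  field_simp

lemma summable_pnat_rpow (r : ℝ) (hr0 : 0 ≤ r) (hr1 : r < 1) :
    Summable (fun m : ℕ+ => r ^ (m:ℕ)) := by
  have h : Summable (fun n : ℕ => r ^ n) :=
    summable_geometric_of_lt_one hr0 hr1
  exact h.comp_injective PNat.coe_injective

lemma integral_G (r θ : ℝ) (hr0 : 0 ≤ r) (hr1 : r < 1) :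
    ∫ t in (0:ℝ)..θ, (-(1/2) * Real.log ((1-r)^2 + 4*r*(Real.sin t)^2))
      = ∑' m : ℕ+, r ^ (m:ℕ) * Real.sin (2 * (m:ℝ) * θ) / (2 * (m:ℝ)^2) := by
  set F : ℕ+ → ℝ → ℝ := fun m t => r ^ (m:ℕ) * Real.cos (2 * (m:ℝ) * t) / (m:ℝ) with hF
  set C : ℝ := ∑' m : ℕ+, r ^ (m:ℕ) with hCdef
  have hsummable := summable_pnat_rpow r hr0 hr1
  -- partial sums integral
  have hpart : ∀ s : Finset ℕ+, ∫ t in (0:ℝ)..θ, (∑ m ∈ s, F m t)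
      = ∑ m ∈ s, r ^ (m:ℕ) * Real.sin (2 * (m:ℝ) * θ) / (2 * (m:ℝ)^2) := by
    intro s
    rw [intervalIntegral.integral_finset_sum]
    · exact Finset.sum_congr rfl fun m _ => integral_term r θ m
    · intro m _
      apply Continuous.intervalIntegrable
      continuity
  -- limit of RHS partial sums
  have hsum2 : Summable (fun m : ℕ+ => r ^ (m:ℕ) * Real.sin (2 * (m:ℝ) * θ) / (2 * (m:ℝ)^2)) := by
    refine Summable.of_norm_bounded hsummable ?_
    intro m
    have hm : (1:ℝ) ≤ (m:ℝ) := by exact_mod_cast m.one_le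
    have h1 : |Real.sin (2 * (m:ℝ) * θ)| ≤ 1 := Real.abs_sin_le_one _
    rw [Real.norm_eq_abs, abs_div, abs_mul]
    rw [abs_of_nonneg (pow_nonneg hr0 _), abs_of_nonneg (by positivity : (0:ℝ) ≤ 2*(m:ℝ)^2)]
    have h2 : (1:ℝ) ≤ 2*(m:ℝ)^2 := by nlinarith
    calc r ^ (m:ℕ) * |Real.sin (2 * (m:ℝ) * θ)| / (2*(m:ℝ)^2)
        ≤ r ^ (m:ℕ) * 1 / 1 := by
          apply div_le_div₀ (by positivity) (by nlinarith [pow_nonneg hr0 (m:ℕ)]) one_pos h2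
    _ = r ^ (m:ℕ) := by ring
  have hR : Tendsto (fun s : Finset ℕ+ => ∑ m ∈ s, r ^ (m:ℕ) * Real.sin (2 * (m:ℝ) * θ) / (2 * (m:ℝ)^2))
      atTop (nhds (∑' m : ℕ+, r ^ (m:ℕ) * Real.sin (2 * (m:ℝ) * θ) / (2 * (m:ℝ)^2))) :=
    hsum2.hasSum
  -- limit of LHS via dominated convergence
  have hL : Tendsto (fun s : Finset ℕ+ => ∫ t in (0:ℝ)..θ, (∑ m ∈ s, F m t)) atTop
      (nhds (∫ t in (0:ℝ)..θ, (-(1/2) * Real.log ((1-r)^2 + 4*r*(Real.sin t)^2)))) := by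
    apply intervalIntegral.tendsto_integral_filter_of_dominated_convergence (bound := fun _ => C)
    · exact Eventually.of_forall fun s => (Continuous.aestronglyMeasurable (by continuity))
    · refine Eventually.of_forall fun s => ?_
      refine Eventually.of_forall fun t => ?_
      have h1 : ‖∑ m ∈ s, F m t‖ ≤ ∑ m ∈ s, r ^ (m:ℕ) := by
        refine (norm_sum_le _ _).trans ?_
        apply Finset.sum_le_sum
        intro m _
        have hm : (1:ℝ) ≤ (m:ℝ) := by exact_mod_cast m.one_le
        rw [hF, Real.norm_eq_abs, abs_div, abs_mul, abs_of_nonneg (pow_nonneg hr0 _),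
          abs_of_nonneg (by positivity : (0:ℝ) ≤ (m:ℝ))]
        have h1 : |Real.cos (2 * (m:ℝ) * t)| ≤ 1 := Real.abs_cos_le_one _
        calc r ^ (m:ℕ) * |Real.cos (2 * (m:ℝ) * t)| / (m:ℝ)
            ≤ r ^ (m:ℕ) * 1 / 1 := by
              apply div_le_div₀ (by positivity) (by nlinarith [pow_nonneg hr0 (m:ℕ)]) one_pos hm
        _ = r ^ (m:ℕ) := by ring
      exact fun _ => h1.trans (hsummable.sum_le_tsum s (fun m _ => pow_nonneg hr0 _))
    · exact intervalIntegrable_const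
    · refine Eventually.of_forall fun t => ?_
      exact fun _ => hasSum_G r t hr0 hr1
  exact tendsto_nhds_unique (hL.congr hpart) hR

lemma summable_inv_sq_pnat : Summable (fun m : ℕ+ => 1 / (2 * ((m:ℕ):ℝ)^2)) := by
  have h : Summable (fun n : ℕ => 1 / (n:ℝ)^2) :=
    (Real.summable_one_div_nat_pow).mpr one_lt_two
  have h2 := (h.comp_injective PNat.coe_injective).div_const 2
  refine h2.congr fun m => ?_
  simp [Function.comp]
  ring

lemma tendstoA (θ : ℝ) :
    Tendsto (fun r : ℝ => ∑' m : ℕ+, r ^ (m:ℕ) * Real.sin (2 * (m:ℝ) * θ) / (2 * (m:ℝ)^2))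
      (nhdsWithin 1 (Set.Iio 1)) (nhds (∑' m : ℕ+, Real.sin (2 * (m:ℝ) * θ) / (2 * (m:ℝ)^2))) := by
  apply tendsto_tsum_of_dominated_convergence (bound := fun m : ℕ+ => 1 / (2 * ((m:ℕ):ℝ)^2))
    summable_inv_sq_pnat
  · intro m
    have h1 : Tendsto (fun r : ℝ => r ^ (m:ℕ)) (nhdsWithin 1 (Set.Iio 1)) (nhds 1) := by
      have h0 := ((continuous_pow (m:ℕ)).tendsto (1:ℝ)).mono_left
        (nhdsWithin_le_nhds (s := Set.Iio 1))
      simpa using h0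
    have h2 := h1.mul_const (Real.sin (2 * (m:ℝ) * θ) / (2 * (m:ℝ)^2))
    rw [one_mul] at h2
    refine h2.congr fun r => ?_
    ring
  · have hmem : Set.Ioo (0:ℝ) 1 ∈ nhdsWithin (1:ℝ) (Set.Iio 1) :=
      Ioo_mem_nhdsLT_of_mem (by constructor <;> norm_num)
    filter_upwards [hmem] with r hr m
    have hm : (1:ℝ) ≤ ((m:ℕ):ℝ) := by exact_mod_cast m.one_le
    have hrm : |r| ^ (m:ℕ) ≤ 1 := pow_le_one₀ (abs_nonneg r) (by rw [abs_of_pos hr.1]; exact hr.2.le)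
    rw [Real.norm_eq_abs, abs_div, abs_mul, abs_pow]
    rw [abs_of_nonneg (by positivity : (0:ℝ) ≤ 2*((m:ℕ):ℝ)^2)]
    have hnum : |r| ^ (m:ℕ) * |Real.sin (2 * (m:ℝ) * θ)| ≤ 1 :=
      mul_le_one₀ hrm (abs_nonneg _) (Real.abs_sin_le_one _)
    gcongr

lemma sin_ne_zero_ae : ∀ᵐ t : ℝ, Real.sin t ≠ 0 := by
  have hcount : Set.Countable {t : ℝ | Real.sin t = 0} := by
    have : {t : ℝ | Real.sin t = 0} ⊆ Set.range (fun n : ℤ => (n:ℝ) * π) := by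
      intro t ht
      obtain ⟨n, hn⟩ := Real.sin_eq_zero_iff.mp ht
      exact ⟨n, hn⟩
    exact (Set.countable_range _).mono this
  have := hcount.measure_zero (μ := volume)
  rw [ae_iff]
  simpa using this

lemma tendstoB (θ : ℝ) :
    Tendsto (fun r : ℝ => ∫ t in (0:ℝ)..θ, (-(1/2) * Real.log ((1-r)^2 + 4*r*(Real.sin t)^2)))
      (nhdsWithin 1 (Set.Iio 1))
      (nhds (∫ t in (0:ℝ)..θ, (-Real.log |2 * Real.sin t|))) := by
  have hbound_int : IntervalIntegrable
      (fun t : ℝ => Real.log 5 / 2 + |Real.log (|Real.sin t|)|) volume 0 θ :=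
    intervalIntegrable_const.add (integrable_log_sin 0 θ).abs
  apply intervalIntegral.tendsto_integral_filter_of_dominated_convergence
    (bound := fun t => Real.log 5 / 2 + |Real.log (|Real.sin t|)|)
  · refine Eventually.of_forall fun r => ?_
    have hc : Continuous fun t : ℝ => (1-r)^2 + 4*r*(Real.sin t)^2 := by continuity
    exact ((Real.measurable_log.comp hc.measurable).const_mul (-(1/2))).aestronglyMeasurable
  · have hmem : Set.Ioo (1/2 : ℝ) 1 ∈ nhdsWithin (1:ℝ) (Set.Iio 1) :=
      Ioo_mem_nhdsLT_of_mem (by constructor <;> norm_num)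
    filter_upwards [hmem] with r hr
    filter_upwards [sin_ne_zero_ae] with t ht _
    set V : ℝ := (1-r)^2 + 4*r*(Real.sin t)^2 with hV
    have hs2 : 0 < (Real.sin t)^2 := by positivity
    have hVlow : 2*(Real.sin t)^2 ≤ V := by nlinarith [sq_nonneg (1-r), hr.1, hr.2]
    have hVpos : 0 < V := by nlinarith
    have hVhigh : V ≤ 5 := by
      have hsin := Real.abs_sin_le_one t
      have : (Real.sin t)^2 ≤ 1 := by nlinarith [abs_nonneg (Real.sin t), sq_abs (Real.sin t)]
      nlinarith [hr.1, hr.2]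
    rw [Real.norm_eq_abs, abs_mul]
    have h5 : |(-(1/2) : ℝ)| = 1/2 := by norm_num
    rw [h5]
    have hcase : |Real.log V| ≤ Real.log 5 + 2 * |Real.log (|Real.sin t|)| := by
      rcases le_or_gt 1 V with hc1 | hc1
      · rw [abs_of_nonneg (Real.log_nonneg hc1)]
        have : Real.log V ≤ Real.log 5 := Real.log_le_log hVpos hVhigh
        nlinarith [abs_nonneg (Real.log |Real.sin t|)]
      · rw [abs_of_nonpos (Real.log_nonpos hVpos.le hc1.le)]
        have h1 : Real.log (2*(Real.sin t)^2) ≤ Real.log V := Real.log_le_log (by positivity) hVlow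
        have h2 : Real.log (2*(Real.sin t)^2) = Real.log 2 + 2 * Real.log |Real.sin t| := by
          rw [Real.log_mul (by norm_num) (by positivity), Real.log_pow, Real.log_abs]
          push_cast
          ring
        have hlog5 : (0:ℝ) ≤ Real.log 5 := Real.log_nonneg (by norm_num)
        have hl2 : (0:ℝ) ≤ Real.log 2 := Real.log_nonneg one_le_two
        have h3 : -(Real.log |Real.sin t|) ≤ |Real.log (|Real.sin t|)| := neg_le_abs _
        nlinarith
    have hfin : (1/2 : ℝ) * |Real.log V| ≤ Real.log 5 / 2 + |Real.log (|Real.sin t|)| := by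
      nlinarith [hcase]
    exact hfin
  · exact hbound_int
  · filter_upwards [sin_ne_zero_ae] with t ht _
    have hs2 : (0:ℝ) < 4*(Real.sin t)^2 := by positivity
    have hcont : Continuous fun r : ℝ => (1-r)^2 + 4*r*(Real.sin t)^2 := by continuity
    have hVt : Tendsto (fun r : ℝ => (1-r)^2 + 4*r*(Real.sin t)^2)
        (nhdsWithin 1 (Set.Iio 1)) (nhds (4*(Real.sin t)^2)) := by
      have h0 := (hcont.tendsto 1).mono_left (nhdsWithin_le_nhds (s := Set.Iio 1))
      have hval : (1-(1:ℝ))^2 + 4*1*(Real.sin t)^2 = 4*(Real.sin t)^2 := by ring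
      rwa [hval] at h0
    have hlog := hVt.log hs2.ne'
    have hfinal := hlog.const_mul (-(1/2 : ℝ))
    have heq : Real.log (4*(Real.sin t)^2) = 2 * Real.log |2*Real.sin t| := by
      rw [show 4*(Real.sin t)^2 = (2*Real.sin t)^2 by ring, ← Real.log_abs,
        abs_pow, Real.log_pow, Real.log_abs]
      push_cast
      ring
    rw [heq, show -(1/2:ℝ) * (2 * Real.log |2*Real.sin t|) = -Real.log |2*Real.sin t| by ring]
      at hfinal
    exact hfinal

theorem lobachevsky_fourier (θ : ℝ) :
    Λ θ = (1 / 2) * ∑' m : ℕ+, Real.sin (2 * m * θ) / (m : ℝ) ^ 2 := by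
  have hA := tendstoA θ
  have hB := tendstoB θ
  have hEq : ∀ᶠ r in nhdsWithin (1:ℝ) (Set.Iio 1),
      (∫ t in (0:ℝ)..θ, (-(1/2) * Real.log ((1-r)^2 + 4*r*(Real.sin t)^2)))
        = ∑' m : ℕ+, r ^ (m:ℕ) * Real.sin (2*(m:ℝ)*θ) / (2*(m:ℝ)^2) := by
    have hmem : Set.Ioo (0:ℝ) 1 ∈ nhdsWithin (1:ℝ) (Set.Iio 1) :=
      Ioo_mem_nhdsLT_of_mem (by constructor <;> norm_num)
    filter_upwards [hmem] with r hr
    exact integral_G r θ hr.1.le hr.2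
  have huniq := tendsto_nhds_unique (hB.congr' hEq) hA
  have hΛ : Λ θ = ∫ t in (0:ℝ)..θ, (-Real.log |2 * Real.sin t|) := by
    rw [Λ, ← intervalIntegral.integral_neg]
  rw [hΛ, huniq]
  rw [show ∑' m : ℕ+, Real.sin (2*(m:ℝ)*θ) / (2*(m:ℝ)^2)
      = ∑' m : ℕ+, (1/2) * (Real.sin (2*(m:ℝ)*θ) / ((m:ℝ))^2) from tsum_congr fun m => by
    have hm : ((m:ℕ):ℝ) ≠ 0 := by exact_mod_cast m.pos.ne'
    field_simp]
  rw [tsum_mul_left]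

end aux
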